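/- Let (M,d) be a metric space, let Z_0, …, Z_q ⊆ M and μ ≥ 1 be such that ⋂_{n=0}^q (Z_n)_r ⊆ (⋂_{n=0}^q Z_n)_{r^μ} for all r ≥ 0. Let V ⊆ M be a nonempty subset with diam(V) ≤ r₀. Then for every ε > 0, the set-to-set distance D(V, ⋂_{n=0}^q Z_n) (the infimum over v ∈ V of the extended infimum distance from v to ⋂ Z_n, valued in [0,∞]) satisfies D(V, ⋂_{n=0}^q Z_n) ≤ (r₀ + ε + max_{0≤n≤q} D(V, Z_n))^μ. -/
import Mathlib


open Metric Bornology Set ENNReal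

/-- The set-to-set distance, valued in `[0,∞]` (it is `∞` if either set is empty). -/
noncomputable def setEDist {M : Type*} [MetricSpace M] (S T : Set M) : ℝ≥0∞ :=
  ⨅ s ∈ S, EMetric.infEdist s T

/-- For a polynomially excisive collection `Z_0, …, Z_q` with exponent `μ` and a nonempty set
`V` of diameter at most `r₀`, the distance from `V` to `⋂ Z_n` is bounded by
`(r₀ + ε + max_n D(V, Z_n))^μ`, for every `ε > 0`. -/
theorem setEDist_iInter_le_of_polyExcisive {M : Type*} [MetricSpace M] (q : ℕ)
    (Z : Fin (q + 1) → Set M) (μ : ℝ) (hμ : 1 ≤ μ)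
    (hpoly : ∀ r : ℝ, 0 ≤ r →
      (⋂ n, cthickening r (Z n)) ⊆ cthickening (r ^ μ) (⋂ n, Z n))
    (V : Set M) (hV : V.Nonempty) (r₀ : ℝ)
    (hdiam : EMetric.diam V ≤ ENNReal.ofReal r₀)
    (ε : ℝ) (hε : 0 < ε) :
    setEDist V (⋂ n, Z n) ≤
      (ENNReal.ofReal r₀ + ENNReal.ofReal ε + ⨆ n, setEDist V (Z n)) ^ μ := by
  set S := ⨆ n, setEDist V (Z n) with hS
  rcases eq_top_or_lt_top S with hStop | hSlt
  · have h : ENNReal.ofReal r₀ + ENNReal.ofReal ε + S = ⊤ := by simp [hStop]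
    rw [h, ENNReal.top_rpow_of_pos (by linarith)]
    exact le_top
  · obtain ⟨v₀, hv₀⟩ := hV
    set r : ℝ := max r₀ 0 + ε + S.toReal with hr
    have hr0 : 0 ≤ r := by positivity
    have hmax : ENNReal.ofReal (max r₀ 0) = ENNReal.ofReal r₀ := by
      rcases le_total 0 r₀ with h | h
      · rw [max_eq_left h]
      · rw [max_eq_right h, ENNReal.ofReal_zero, eq_comm, ENNReal.ofReal_eq_zero]
        exact h
    have hrofReal : ENNReal.ofReal r = ENNReal.ofReal r₀ + ENNReal.ofReal ε + S := by
      rw [hr, ENNReal.ofReal_add (by positivity) S.toReal_nonneg,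
        ENNReal.ofReal_add (le_max_right r₀ 0) hε.le, ENNReal.ofReal_toReal hSlt.ne, hmax]
    have hmem : v₀ ∈ ⋂ n, cthickening r (Z n) := by
      rw [mem_iInter]
      intro n
      have hDn : setEDist V (Z n) < ⊤ := lt_of_le_of_lt (le_iSup (fun n => setEDist V (Z n)) n) hSlt
      have hlt : setEDist V (Z n) < setEDist V (Z n) + ENNReal.ofReal ε :=
        ENNReal.lt_add_right hDn.ne (ENNReal.ofReal_pos.mpr hε).ne'
      rw [setEDist] at hlt
      obtain ⟨v, hv'⟩ := iInf_lt_iff.mp hlt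
      obtain ⟨hvV, hv⟩ := iInf_lt_iff.mp hv'
      have h1 : EMetric.infEdist v₀ (Z n) ≤ EMetric.infEdist v (Z n) + edist v₀ v :=
        EMetric.infEdist_le_infEdist_add_edist
      have h2 : edist v₀ v ≤ ENNReal.ofReal r₀ :=
        le_trans (EMetric.edist_le_diam_of_mem hv₀ hvV) hdiam
      have h3 : setEDist V (Z n) ≤ S := le_iSup (fun n => setEDist V (Z n)) n
      have : EMetric.infEdist v₀ (Z n) ≤ ENNReal.ofReal r := by
        rw [hrofReal]
        calc EMetric.infEdist v₀ (Z n) ≤ EMetric.infEdist v (Z n) + edist v₀ v := h1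
          _ ≤ (setEDist V (Z n) + ENNReal.ofReal ε) + ENNReal.ofReal r₀ :=
              add_le_add hv.le h2
          _ ≤ (S + ENNReal.ofReal ε) + ENNReal.ofReal r₀ := by gcongr
          _ = ENNReal.ofReal r₀ + ENNReal.ofReal ε + S := by ring
      exact this
    have hmem2 := hpoly r hr0 hmem
    have h4 : EMetric.infEdist v₀ (⋂ n, Z n) ≤ ENNReal.ofReal (r ^ μ) := hmem2
    calc setEDist V (⋂ n, Z n) ≤ EMetric.infEdist v₀ (⋂ n, Z n) := iInf₂_le v₀ hv₀
      _ ≤ ENNReal.ofReal (r ^ μ) := h4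
      _ = (ENNReal.ofReal r) ^ μ := by
          rw [← ENNReal.ofReal_rpow_of_nonneg hr0 (by linarith)]
      _ = _ := by rw [hrofReal]
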